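/- Let C be a finite nonempty set and m ≥ 1 an integer. Among all probability mass vectors p on C of the form p(c) = q_c/m with q_c ∈ ℕ and ∑_c q_c = m, the total variation distance to the uniform distribution u(c) = 1/|C| is minimized by any allocation in which each q_c equals ⌊m/|C|⌋ or ⌈m/|C|⌉. -/

import Mathlib

open Finset

/-- Optimality of balanced allocation: among integer allocations `q` with budget `m`,
any allocation `q*` with each `q* c ∈ {⌊m/n⌋, ⌈m/n⌉}` minimizes the total variation
distance of `q/m` to the uniform distribution on `C` (with `n = |C|`). -/
theorem stmt8 {C : Type*} [Fintype C] [Nonempty C] (m : ℕ) (hm : 1 ≤ m)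
    (qstar : C → ℕ) (hqstars : ∑ c, qstar c = m)
    (hbal : ∀ c, qstar c = ⌊(m : ℝ) / (Fintype.card C : ℝ)⌋₊ ∨
                 qstar c = ⌈(m : ℝ) / (Fintype.card C : ℝ)⌉₊)
    (q : C → ℕ) (hqs : ∑ c, q c = m) :
    (1 / 2) * ∑ c, |(qstar c : ℝ) / m - 1 / (Fintype.card C : ℝ)| ≤
      (1 / 2) * ∑ c, |(q c : ℝ) / m - 1 / (Fintype.card C : ℝ)| := by
  classical
  set n := Fintype.card C with hn
  have hn0 : 0 < n := Fintype.card_pos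
  have hm0 : (0:ℝ) < m := by exact_mod_cast hm
  have hnR : (0:ℝ) < n := by exact_mod_cast hn0
  set t : ℝ := (m:ℝ) / (n:ℝ) with htdef
  set k := m / n with hk
  set r := m % n with hr
  have hmnk : n * k + r = m := Nat.div_add_mod m n
  have hmR : (m:ℝ) = (n:ℝ) * (k:ℝ) + (r:ℝ) := by exact_mod_cast hmnk.symm
  have hrn : r < n := Nat.mod_lt m hn0
  have hrnR : (r:ℝ) < (n:ℝ) := by exact_mod_cast hrn
  have htk : t - (k:ℝ) = (r:ℝ) / n := by
    rw [htdef, hmR]; field_simp; ring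
  have htk1 : (k:ℝ) + 1 - t = ((n:ℝ) - (r:ℝ)) / n := by
    rw [htdef, hmR]; field_simp; ring
  have hnr0 : (0:ℝ) ≤ ((n:ℝ) - (r:ℝ)) / n := div_nonneg (by linarith) hnR.le
  have hfloor : ⌊(m : ℝ) / (n : ℝ)⌋₊ = k := by
    rw [show ((n:ℝ)) = ((n:ℕ):ℝ) from rfl, Nat.floor_div_natCast, Nat.floor_natCast]
  -- Reduce to the comparison of ∑ |q c - t|
  suffices h : ∑ c, |(qstar c : ℝ) - t| ≤ ∑ c, |(q c : ℝ) - t| by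
    have key : ∀ x : ℕ, |(x:ℝ)/m - 1/(n:ℝ)| = |(x:ℝ) - t| / m := by
      intro x
      have e : (x:ℝ)/m - 1/(n:ℝ) = ((x:ℝ) - t)/m := by
        rw [htdef]
        field_simp
      rw [e, abs_div, abs_of_pos hm0]
    simp_rw [key]
    rw [← Finset.sum_div, ← Finset.sum_div]
    gcongr
  rcases Nat.eq_zero_or_pos r with hr0 | hrpos
  · -- exact division: t = k, qstar c = k for all c
    have htk' : t = (k:ℝ) := by
      have h' := htk; rw [hr0] at h'
      rw [Nat.cast_zero, zero_div] at h'
      linarith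
    have hceil : ⌈(m : ℝ) / (n : ℝ)⌉₊ = k := by
      rw [show (m:ℝ)/(n:ℝ) = t from rfl, htk', Nat.ceil_natCast]
    have hLHS : ∑ c, |(qstar c : ℝ) - t| = 0 := by
      apply Finset.sum_eq_zero
      intro c _
      rcases hbal c with hc | hc <;>
        simp [hc, hfloor, hceil, htk', hn]
    rw [hLHS]
    exact Finset.sum_nonneg fun c _ => abs_nonneg _
  · -- r > 0
    have hrR : (0:ℝ) < (r:ℝ) := by exact_mod_cast hrpos
    have habs1 : |((k:ℝ) + 1) - t| = ((n:ℝ) - (r:ℝ)) / n := by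
      rw [abs_of_nonneg (by rw [htk1]; exact hnr0), htk1]
    have habs0 : |(k:ℝ) - t| = (r:ℝ) / n := by
      rw [abs_sub_comm, abs_of_nonneg (by rw [htk]; positivity), htk]
    have hceil : ⌈(m : ℝ) / (n : ℝ)⌉₊ = k + 1 := by
      rw [Nat.ceil_eq_iff (by omega)]
      constructor
      · have h1 : (0:ℝ) < (r:ℝ)/n := div_pos hrR hnR
        have e : ((k+1-1 : ℕ):ℝ) = (k:ℝ) := by push_cast; ring
        rw [e]; linarith [htk]
      · push_cast; linarith [htk1, hnr0]
    have hstar : ∀ c, qstar c = k ∨ qstar c = k + 1 := by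
      intro c
      rcases hbal c with hc | hc
      · left; rw [hc]; exact hfloor
      · right; rw [hc]; exact hceil
    -- count of cells receiving k+1 in qstar equals r
    set s := (univ.filter (fun c => qstar c = k+1)).card with hsdef
    have hcards : s + (univ.filter (fun c => ¬ qstar c = k+1)).card = n := by
      rw [hsdef]
      have := Finset.card_filter_add_card_filter_not (s := (univ : Finset C))
        (fun c => qstar c = k+1)
      simpa [hn] using this
    have hsle : s ≤ n := by omega
    have h1 : ∑ c ∈ univ.filter (fun c => qstar c = k+1), qstar c = s * (k+1) := by
      rw [Finset.sum_congr rfl (fun c hc => (Finset.mem_filter.mp hc).2),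
        Finset.sum_const, smul_eq_mul]
    have h2 : ∑ c ∈ univ.filter (fun c => ¬ qstar c = k+1), qstar c = (n - s) * k := by
      have hk' : ∀ c ∈ univ.filter (fun c => ¬ qstar c = k+1), qstar c = k := by
        intro c hc
        rcases hstar c with h | h
        · exact h
        · exact absurd h (Finset.mem_filter.mp hc).2
      rw [Finset.sum_congr rfl hk', Finset.sum_const, smul_eq_mul]
      congr 1
      omega
    have hsr : s = r := by
      have hsplit := Finset.sum_filter_add_sum_filter_not univ (fun c => qstar c = k+1) qstar
      rw [h1, h2, hqstars] at hsplit
      have hsk : s * k ≤ n * k := Nat.mul_le_mul_right k hsle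
      have e1 : s * (k+1) + (n - s) * k = n * k + s := by
        zify [hsk, hsle]; ring
      omega
    -- value of the balanced allocation
    have hLHS : ∑ c, |(qstar c : ℝ) - t| = 2 * (r:ℝ) * ((n:ℝ) - (r:ℝ)) / n := by
      rw [← Finset.sum_filter_add_sum_filter_not univ (fun c => qstar c = k+1)
        (fun c => |(qstar c : ℝ) - t|)]
      have e1 : ∑ c ∈ univ.filter (fun c => qstar c = k+1), |(qstar c : ℝ) - t|
          = (s:ℝ) * (((n:ℝ) - (r:ℝ))/n) := by
        have hpt : ∀ c ∈ univ.filter (fun c => qstar c = k+1),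
            |(qstar c : ℝ) - t| = ((n:ℝ) - (r:ℝ))/n := by
          intro c hc
          rw [(Finset.mem_filter.mp hc).2]
          push_cast
          exact habs1
        rw [Finset.sum_congr rfl hpt, Finset.sum_const, nsmul_eq_mul, hsdef]
      have e2 : ∑ c ∈ univ.filter (fun c => ¬ qstar c = k+1), |(qstar c : ℝ) - t|
          = ((n:ℝ) - (s:ℝ)) * ((r:ℝ)/n) := by
        have hpt : ∀ c ∈ univ.filter (fun c => ¬ qstar c = k+1),
            |(qstar c : ℝ) - t| = (r:ℝ)/n := by
          intro c hc
          have hck : qstar c = k := by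
            rcases hstar c with h | h
            · exact h
            · exact absurd h (Finset.mem_filter.mp hc).2
          rw [hck]
          exact habs0
        rw [Finset.sum_congr rfl hpt, Finset.sum_const, nsmul_eq_mul,
          show (univ.filter (fun c => ¬ qstar c = k+1)).card = n - s from by omega,
          Nat.cast_sub hsle]
      rw [e1, e2, hsr]
      field_simp
      ring
    rw [hLHS]
    -- lower bound for an arbitrary allocation
    set A := univ.filter (fun c => k + 1 ≤ q c) with hAdef
    set a := A.card with hadef
    have hale : a ≤ n :=
      le_trans (Finset.card_filter_le _ _) (le_of_eq Finset.card_univ)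
    set Sp := ∑ c, max ((q c : ℝ) - t) 0 with hSp
    set Sm := ∑ c, max (t - (q c : ℝ)) 0 with hSm
    have hv0 : ∑ c, ((q c : ℝ) - t) = 0 := by
      rw [Finset.sum_sub_distrib, Finset.sum_const, card_univ, ← hn, nsmul_eq_mul]
      have hq' : ∑ c, ((q c : ℕ):ℝ) = (m:ℝ) := by exact_mod_cast congrArg (Nat.cast : ℕ → ℝ) hqs
      rw [hq', htdef]
      field_simp
      ring
    have hSpm : Sp = Sm := by
      have hd : Sp - Sm = ∑ c, ((q c : ℝ) - t) := by
        rw [hSp, hSm, ← Finset.sum_sub_distrib]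
        exact Finset.sum_congr rfl fun c _ => by
          simpa [neg_sub] using max_zero_sub_max_neg_zero_eq_self ((q c : ℝ) - t)
      rw [hv0] at hd
      linarith
    have hF : ∑ c, |(q c : ℝ) - t| = Sp + Sm := by
      rw [hSp, hSm, ← Finset.sum_add_distrib]
      refine Finset.sum_congr rfl fun c _ => ?_
      have := max_zero_add_max_neg_zero_eq_abs_self ((q c : ℝ) - t)
      simp only [neg_sub] at this
      linarith
    have hSpB : (a:ℝ) * (((n:ℝ) - (r:ℝ))/n) ≤ Sp := by
      calc (a:ℝ) * (((n:ℝ) - (r:ℝ))/n) = ∑ _c ∈ A, (((n:ℝ) - (r:ℝ))/n) := by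
            rw [Finset.sum_const, nsmul_eq_mul, hadef]
        _ ≤ ∑ c ∈ A, max ((q c : ℝ) - t) 0 := by
            apply Finset.sum_le_sum
            intro c hc
            have hq : (k:ℝ) + 1 ≤ (q c : ℝ) := by
              have := (Finset.mem_filter.mp hc).2
              exact_mod_cast this
            calc ((n:ℝ) - (r:ℝ))/n = (k:ℝ) + 1 - t := htk1.symm
              _ ≤ (q c : ℝ) - t := by linarith
              _ ≤ max ((q c : ℝ) - t) 0 := le_max_left _ _
        _ ≤ Sp := Finset.sum_le_sum_of_subset_of_nonneg (Finset.subset_univ A)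
            (fun _ _ _ => le_max_right _ _)
    have hSmB : ((n:ℝ) - (a:ℝ)) * ((r:ℝ)/n) ≤ Sm := by
      have hcardAc : (univ.filter (fun c => ¬ (k + 1 ≤ q c))).card = n - a := by
        have h' := Finset.card_filter_add_card_filter_not (s := (univ : Finset C))
          (fun c => k + 1 ≤ q c)
        rw [Finset.card_univ] at h'
        rw [hadef, hAdef]
        omega
      calc ((n:ℝ) - (a:ℝ)) * ((r:ℝ)/n)
          = ∑ _c ∈ univ.filter (fun c => ¬ (k + 1 ≤ q c)), ((r:ℝ)/n) := by
            rw [Finset.sum_const, nsmul_eq_mul, hcardAc, Nat.cast_sub hale]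
        _ ≤ ∑ c ∈ univ.filter (fun c => ¬ (k + 1 ≤ q c)), max (t - (q c : ℝ)) 0 := by
            apply Finset.sum_le_sum
            intro c hc
            have hq : q c ≤ k := by
              have := (Finset.mem_filter.mp hc).2
              omega
            have hqR : (q c : ℝ) ≤ (k:ℝ) := by exact_mod_cast hq
            calc (r:ℝ)/n = t - (k:ℝ) := htk.symm
              _ ≤ t - (q c : ℝ) := by linarith
              _ ≤ max (t - (q c : ℝ)) 0 := le_max_left _ _
        _ ≤ Sm := Finset.sum_le_sum_of_subset_of_nonneg (Finset.subset_univ _)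
            (fun _ _ _ => le_max_right _ _)
    rw [hF, ← hSpm]
    rcases le_or_gt (r:ℝ) (a:ℝ) with hra | hra
    · have hmono : (r:ℝ) * (((n:ℝ) - (r:ℝ))/n) ≤ (a:ℝ) * (((n:ℝ) - (r:ℝ))/n) :=
        mul_le_mul_of_nonneg_right hra hnr0
      have h2 : 2 * (r:ℝ) * ((n:ℝ) - (r:ℝ)) / n = 2 * ((r:ℝ) * (((n:ℝ) - (r:ℝ))/n)) := by
        ring
      linarith
    · have hna : (n:ℝ) - (r:ℝ) ≤ (n:ℝ) - (a:ℝ) := by linarith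
      have hmono : ((n:ℝ) - (r:ℝ)) * ((r:ℝ)/n) ≤ ((n:ℝ) - (a:ℝ)) * ((r:ℝ)/n) :=
        mul_le_mul_of_nonneg_right hna (by positivity)
      have h2 : 2 * (r:ℝ) * ((n:ℝ) - (r:ℝ)) / n = 2 * (((n:ℝ) - (r:ℝ)) * ((r:ℝ)/n)) := by
        ring
      linarith [hSpm ▸ hSpB, hSmB]
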